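/- arXiv:math/0405465 — 4 statements merged into one kernel-verified Lean document; each statement's English description precedes it below -/
import Mathlib

section
/- Let R be a commutative integral domain and let M be a q × p matrix over R, inducing an R-linear map R^p → R^q (by matrix–vector multiplication). Then the cokernel H = R^q / (range of this map) is a torsion R-module if and only if there exists an injection f : Fin q → Fin p such that the q × q submatrix of M with columns selected by f has nonzero determinant (equivalently, some q × q minor of M is nonzero). -/
open Matrix


/-- Lemma 2.3(2), concrete form: over a commutative domain, the cokernel of a `q × p`
matrix is a torsion module iff some `q × q` minor of the matrix is nonzero. -/
theorem coker_isTorsion_iff_exists_minor_ne_zero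
    {R : Type*} [CommRing R] [IsDomain R] {p q : ℕ}
    (M : Matrix (Fin q) (Fin p) R) :
    Module.IsTorsion R ((Fin q → R) ⧸ LinearMap.range M.mulVecLin) ↔
      ∃ f : Fin q → Fin p, Function.Injective f ∧ (M.submatrix id f).det ≠ 0 := by
  classical
  set K := FractionRing R
  set φ := algebraMap R K with hφ
  have hφinj : Function.Injective φ := IsFractionRing.injective R K
  set M' : Matrix (Fin q) (Fin p) K := M.map φ with hM'
  constructor
  · intro h
    -- the columns of M' span K^q
    have htop : LinearMap.range M'.mulVecLin = ⊤ := by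
      rw [eq_top_iff, ← (Pi.basisFun K (Fin q)).span_eq, Submodule.span_le]
      rintro _ ⟨i, rfl⟩
      obtain ⟨r, hr⟩ := @h (Submodule.Quotient.mk (Pi.single i (1 : R)))
      rw [← Submodule.Quotient.mk_smul, Submodule.Quotient.mk_eq_zero] at hr
      obtain ⟨x, hx⟩ := hr
      have hrne : φ (r : R) ≠ 0 := fun h0 =>
        nonZeroDivisors.ne_zero r.2 (hφinj (by simpa using h0))
      refine SetLike.mem_coe.2 ⟨(φ (r : R))⁻¹ • (φ ∘ x), ?_⟩
      have key : M'.mulVec (φ ∘ x) = φ (r : R) • Pi.single i (1 : K) := by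
        funext j
        rw [← RingHom.map_mulVec]
        simp only [Matrix.mulVecLin_apply] at hx
        rw [hx]
        by_cases hji : j = i <;>
          simp [hji, Pi.single_apply, Submonoid.smul_def, smul_eq_mul]
      simp only [_root_.map_smul, Matrix.mulVecLin_apply, Matrix.mulVec_smul, key,
        Pi.basisFun_apply]
      rw [smul_smul, inv_mul_cancel₀ hrne, one_smul]
    have hspan : Submodule.span K (Set.range M'ᵀ) = ⊤ := by
      rw [← htop, Matrix.range_mulVecLin]
      rfl
    obtain ⟨b, hb₁, hb₂, hb₃⟩ := exists_linearIndependent K (Set.range M'ᵀ)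
    rw [hspan] at hb₂
    have hbfin : b.Finite := hb₃.setFinite
    haveI : Fintype b := hbfin.fintype
    have hbbasis : Module.Basis b K (Fin q → K) := Module.Basis.mk hb₃ (by rw [Subtype.range_val, hb₂])
    have hcard : Fintype.card b = q := by
      have := Module.finrank_eq_card_basis hbbasis
      simpa [Module.finrank_fintype_fun_eq_card] using this.symm
    let e : Fin q ≃ b := (Fintype.equivFinOfCardEq hcard).symm
    have hchoice : ∀ v : b, ∃ j : Fin p, M'ᵀ j = (v : Fin q → K) := fun v => hb₁ v.2
    choose g hg using hchoice
    refine ⟨fun i => g (e i), ?_, ?_⟩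
    · intro i j hij
      have h2 : (e i : Fin q → K) = (e j : Fin q → K) := by
        rw [← hg (e i), ← hg (e j)]
        exact congrArg M'ᵀ hij
      exact e.injective (Subtype.ext h2)
    · -- det over K
      have hli : LinearIndependent K (fun i => ((M'.submatrix id fun i => g (e i)))ᵀ i) := by
        have : (fun i => ((M'.submatrix id fun i => g (e i)))ᵀ i)
            = (fun v : b => (v : Fin q → K)) ∘ e := by
          funext i
          have : ((M'.submatrix id fun i => g (e i)))ᵀ i = M'ᵀ (g (e i)) := by
            funext j; rfl
          rw [this, hg]
          rfl
        rw [this]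
        exact hb₃.comp e e.injective
      have hunit : IsUnit (M'.submatrix id fun i => g (e i)) :=
        Matrix.linearIndependent_cols_iff_isUnit.1 hli
      have hdetK : (M'.submatrix id fun i => g (e i)).det ≠ 0 :=
        IsUnit.ne_zero ((Matrix.isUnit_iff_isUnit_det _).1 hunit)
      intro h0
      apply hdetK
      have : (M'.submatrix id fun i => g (e i)) = (M.submatrix id fun i => g (e i)).map φ := by
        funext i j; rfl
      rw [this, ← RingHom.mapMatrix_apply, ← RingHom.map_det, h0, map_zero]
  · rintro ⟨f, hf, hdet⟩
    set N := M.submatrix id f with hN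
    intro z
    refine Submodule.Quotient.induction_on _ z fun v => ?_
    refine ⟨⟨N.det, mem_nonZeroDivisors_of_ne_zero hdet⟩, ?_⟩
    rw [Submonoid.smul_def, ← Submodule.Quotient.mk_smul, Submodule.Quotient.mk_eq_zero]
    set w := N.adjugate.mulVec v with hw
    refine ⟨Function.extend f w 0, ?_⟩
    have key : M.mulVec (Function.extend f w 0) = N.mulVec w := by
      funext i
      simp only [Matrix.mulVec, dotProduct]
      have h1 : ∑ j : Fin p, M i j * Function.extend f w 0 j
          = ∑ j ∈ Finset.univ.image f, M i j * Function.extend f w 0 j := by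
        refine (Finset.sum_subset (Finset.subset_univ _) ?_).symm
        intro j _ hj
        rw [Function.extend_apply' _ _ _
          (fun ⟨a, ha⟩ => hj (ha ▸ Finset.mem_image_of_mem f (Finset.mem_univ a))),
          Pi.zero_apply, mul_zero]
      rw [h1, Finset.sum_image (fun a _ b _ hab => hf hab)]
      refine Finset.sum_congr rfl fun k _ => ?_
      rw [hf.extend_apply]
      rfl
    rw [Matrix.mulVecLin_apply, key, hw, Matrix.mulVec_mulVec, Matrix.mul_adjugate,
      Matrix.smul_mulVec, Matrix.one_mulVec]
end

section
/- Let R be a principal ideal domain. Let P be an a × a matrix, Q a b × b matrix, and S a c × c matrix over R, with cokernels coker P = R^a/(range of P), coker Q = R^b/(range of Q), coker S = R^c/(range of S) (each matrix acting by matrix–vector multiplication). Suppose there exist R-linear maps forming a short exact sequence 0 → coker P → coker Q → coker S → 0 (the first map injective, the second surjective, range of the first equal to kernel of the second). Then det Q is associated to (det P)·(det S), i.e. det Q = u·(det P)·(det S) for some unit u of R. -/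
open Matrix

set_option linter.unusedSectionVars false

section Aux

variable {R : Type*} [CommRing R] [IsDomain R]

/-- If `det M ≠ 0` then the cokernel of `M` is a torsion module. -/
lemma coker_torsion_of_det_ne_zero {n : Type*} [Fintype n] [DecidableEq n]
    (M : Matrix n n R) (h : M.det ≠ 0) :
    Module.IsTorsion R ((n → R) ⧸ LinearMap.range M.mulVecLin) := by
  intro x
  obtain ⟨v, rfl⟩ := Submodule.Quotient.mk_surjective _ x
  refine ⟨⟨M.det, mem_nonZeroDivisors_of_ne_zero h⟩, ?_⟩
  have hv : M.mulVecLin (M.adjugate.mulVec v) = M.det • v := by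
    simp [Matrix.mulVecLin_apply, Matrix.mulVec_mulVec, Matrix.mul_adjugate,
      Matrix.smul_mulVec, Matrix.one_mulVec]
  have : M.det • v ∈ LinearMap.range M.mulVecLin := ⟨_, hv⟩
  rw [← Submodule.Quotient.mk_smul, Submodule.Quotient.mk_eq_zero]
  exact this

/-- If the cokernel of `M` is a torsion module then `det M ≠ 0`. -/
lemma det_ne_zero_of_coker_torsion {n : Type*} [Fintype n] [DecidableEq n]
    (M : Matrix n n R) (h : Module.IsTorsion R ((n → R) ⧸ LinearMap.range M.mulVecLin)) :
    M.det ≠ 0 := by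
  classical
  -- for each i, pick rᵢ ≠ 0 with rᵢ • eᵢ ∈ range M, build N with M * N = diagonal r
  have key : ∀ i : n, ∃ r : R, r ≠ 0 ∧ r • (Pi.single i 1 : n → R) ∈ LinearMap.range M.mulVecLin := by
    intro i
    obtain ⟨⟨r, hr⟩, hrx⟩ := @h (Submodule.Quotient.mk (Pi.single i 1))
    refine ⟨r, nonZeroDivisors.ne_zero hr, ?_⟩
    rwa [← Submodule.Quotient.mk_smul, Submodule.Quotient.mk_eq_zero] at hrx
  choose r hr hu using key
  choose u hu using fun i => (LinearMap.mem_range).mp (hu i)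
  set N : Matrix n n R := Matrix.of fun i j => u j i with hN
  have hMN : M * N = Matrix.diagonal r := by
    ext i j
    have := congrFun (hu j) i
    simp only [Matrix.mulVecLin_apply, Matrix.mulVec, dotProduct] at this
    simp only [Matrix.mul_apply, hN, Matrix.of_apply, Matrix.diagonal_apply]
    rw [this]
    rcases eq_or_ne i j with rfl | hij
    · simp
    · simp [hij]
  intro hdet
  have : M.det * N.det = ∏ i, r i := by rw [← Matrix.det_mul, hMN, Matrix.det_diagonal]
  rw [hdet, zero_mul] at this
  exact (Finset.prod_ne_zero_iff.mpr fun i _ => hr i) this.symm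


variable {R : Type*} [CommRing R] [IsDomain R]

lemma injective_mulVecLin_of_forall {n m : Type*} [Fintype n] (M : Matrix m n R)
    (H : ∀ v, M *ᵥ v = 0 → v = 0) : Function.Injective M.mulVecLin := by
  intro x y hxy
  have : M *ᵥ (x - y) = 0 := by
    rw [Matrix.mulVec_sub, sub_eq_zero]; exact hxy
  have := H _ this
  rwa [sub_eq_zero] at this

lemma injective_mulVecLin_of_det_ne_zero {n : Type*} [Fintype n] [DecidableEq n]
    (M : Matrix n n R) (h : M.det ≠ 0) : Function.Injective M.mulVecLin := by
  refine injective_mulVecLin_of_forall M fun v hv => ?_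
  have h2 : M.adjugate *ᵥ (M *ᵥ v) = M.det • v := by
    rw [Matrix.mulVec_mulVec, Matrix.adjugate_mul, Matrix.smul_mulVec, Matrix.one_mulVec]
  rw [hv, Matrix.mulVec_zero] at h2
  funext i
  have := congrFun h2.symm i
  simpa [h] using this

/-- Schanuel-type lemma: two injective square presentations of the same module have
associated determinants. -/
lemma det_associated_of_two_presentations {n m : Type*}
    [Fintype n] [DecidableEq n] [Fintype m] [DecidableEq m]
    (A : Matrix n n R) (B : Matrix m m R) {M : Type*} [AddCommGroup M] [Module R M]
    (π1 : (n → R) →ₗ[R] M) (π2 : (m → R) →ₗ[R] M)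
    (h1 : Function.Surjective π1) (h2 : Function.Surjective π2)
    (k1 : LinearMap.ker π1 = LinearMap.range A.mulVecLin)
    (k2 : LinearMap.ker π2 = LinearMap.range B.mulVecLin)
    (iA : Function.Injective A.mulVecLin) (iB : Function.Injective B.mulVecLin) :
    Associated A.det B.det := by
  classical
  obtain ⟨σ, hσ⟩ := Module.projective_lifting_property π2 π1 h2
  obtain ⟨τ, hτ⟩ := Module.projective_lifting_property π1 π2 h1
  have hσ' : ∀ v, (LinearMap.toMatrix' σ) *ᵥ v = σ v := by
    intro v
    rw [← Matrix.mulVecLin_apply, ← Matrix.toLin'_apply', Matrix.toLin'_toMatrix']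
  have hτ' : ∀ v, (LinearMap.toMatrix' τ) *ᵥ v = τ v := by
    intro v
    rw [← Matrix.mulVecLin_apply, ← Matrix.toLin'_apply', Matrix.toLin'_toMatrix']
  have hσπ : ∀ v, π2 (σ v) = π1 v := fun v => congrArg (· v) hσ
  have hτπ : ∀ v, π1 (τ v) = π2 v := fun v => congrArg (· v) hτ
  set F1 : Matrix (n ⊕ m) (n ⊕ m) R := Matrix.fromBlocks 1 0 (LinearMap.toMatrix' σ) B with hF1def
  set F2 : Matrix (n ⊕ m) (n ⊕ m) R := Matrix.fromBlocks A (LinearMap.toMatrix' τ) 0 1 with hF2def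
  have hF1 : ∀ w, F1 *ᵥ w =
      Sum.elim (w ∘ Sum.inl) (σ (w ∘ Sum.inl) + B *ᵥ (w ∘ Sum.inr)) := by
    intro w
    rw [hF1def, Matrix.fromBlocks_mulVec, Matrix.one_mulVec, Matrix.zero_mulVec, add_zero, hσ']
  have hF2 : ∀ w, F2 *ᵥ w =
      Sum.elim (A *ᵥ (w ∘ Sum.inl) + τ (w ∘ Sum.inr)) (w ∘ Sum.inr) := by
    intro w
    rw [hF2def, Matrix.fromBlocks_mulVec, Matrix.one_mulVec, Matrix.zero_mulVec, zero_add, hτ']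
  -- injectivity
  have kerB : ∀ v, B *ᵥ v = 0 → v = 0 := by
    intro v hv
    have : B.mulVecLin v = B.mulVecLin 0 := by simpa [Matrix.mulVecLin_apply] using hv
    exact iB this
  have kerA : ∀ v, A *ᵥ v = 0 → v = 0 := by
    intro v hv
    have : A.mulVecLin v = A.mulVecLin 0 := by simpa [Matrix.mulVecLin_apply] using hv
    exact iA this
  have inj1 : Function.Injective F1.mulVecLin := by
    refine injective_mulVecLin_of_forall _ fun w hw => ?_
    rw [hF1] at hw
    have ha : (w ∘ Sum.inl) = 0 := funext fun i => congrFun hw (Sum.inl i)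
    have hb : σ (w ∘ Sum.inl) + B *ᵥ (w ∘ Sum.inr) = 0 :=
      funext fun i => congrFun hw (Sum.inr i)
    rw [ha, map_zero, zero_add] at hb
    have hb' := kerB _ hb
    funext i
    cases i with
    | inl i => exact congrFun ha i
    | inr i => exact congrFun hb' i
  have inj2 : Function.Injective F2.mulVecLin := by
    refine injective_mulVecLin_of_forall _ fun w hw => ?_
    rw [hF2] at hw
    have hb : (w ∘ Sum.inr) = 0 := funext fun i => congrFun hw (Sum.inr i)
    have ha : A *ᵥ (w ∘ Sum.inl) + τ (w ∘ Sum.inr) = 0 :=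
      funext fun i => congrFun hw (Sum.inl i)
    rw [hb, map_zero, add_zero] at ha
    have ha' := kerA _ ha
    funext i
    cases i with
    | inl i => exact congrFun ha' i
    | inr i => exact congrFun hb i
  -- ranges
  have mem1 : ∀ w, w ∈ LinearMap.range F1.mulVecLin ↔ π1 (w ∘ Sum.inl) = π2 (w ∘ Sum.inr) := by
    intro w
    constructor
    · rintro ⟨v, rfl⟩
      rw [Matrix.mulVecLin_apply, hF1]
      have : (B *ᵥ (v ∘ Sum.inr)) ∈ LinearMap.ker π2 := by
        rw [k2]; exact ⟨_, rfl⟩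
      simp only [Sum.elim_comp_inl, Sum.elim_comp_inr, map_add, hσπ,
        LinearMap.mem_ker.mp this, add_zero]
    · intro hw
      have : (w ∘ Sum.inr) - σ (w ∘ Sum.inl) ∈ LinearMap.ker π2 := by
        rw [LinearMap.mem_ker, map_sub, hσπ, hw, sub_self]
      rw [k2] at this
      obtain ⟨k, hk⟩ := this
      refine ⟨Sum.elim (w ∘ Sum.inl) k, ?_⟩
      rw [Matrix.mulVecLin_apply, hF1]
      rw [Matrix.mulVecLin_apply] at hk
      simp only [Sum.elim_comp_inl, Sum.elim_comp_inr, hk]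
      funext i
      cases i with
      | inl i => rfl
      | inr i => simp
  have mem2 : ∀ w, w ∈ LinearMap.range F2.mulVecLin ↔ π1 (w ∘ Sum.inl) = π2 (w ∘ Sum.inr) := by
    intro w
    constructor
    · rintro ⟨v, rfl⟩
      rw [Matrix.mulVecLin_apply, hF2]
      have : (A *ᵥ (v ∘ Sum.inl)) ∈ LinearMap.ker π1 := by
        rw [k1]; exact ⟨_, rfl⟩
      simp only [Sum.elim_comp_inl, Sum.elim_comp_inr, map_add, hτπ,
        LinearMap.mem_ker.mp this, zero_add]
    · intro hw
      have : (w ∘ Sum.inl) - τ (w ∘ Sum.inr) ∈ LinearMap.ker π1 := by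
        rw [LinearMap.mem_ker, map_sub, hτπ, hw, sub_self]
      rw [k1] at this
      obtain ⟨j, hj⟩ := this
      refine ⟨Sum.elim j (w ∘ Sum.inr), ?_⟩
      rw [Matrix.mulVecLin_apply, hF2]
      rw [Matrix.mulVecLin_apply] at hj
      simp only [Sum.elim_comp_inl, Sum.elim_comp_inr, hj]
      funext i
      cases i with
      | inl i => simp
      | inr i => rfl
  have hrange : LinearMap.range F2.mulVecLin = LinearMap.range F1.mulVecLin := by
    ext w; rw [mem1, mem2]
  -- the comparison equivalence
  let e1 := LinearEquiv.ofInjective F1.mulVecLin inj1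
  let e2 := LinearEquiv.ofInjective F2.mulVecLin inj2
  let e : ((n ⊕ m) → R) ≃ₗ[R] ((n ⊕ m) → R) :=
    e2.trans ((LinearEquiv.ofEq _ _ hrange).trans e1.symm)
  have he : F1.mulVecLin ∘ₗ (e : ((n ⊕ m) → R) →ₗ[R] ((n ⊕ m) → R)) = F2.mulVecLin := by
    apply LinearMap.ext
    intro v
    have h1' : F1.mulVecLin (e v) = (e1 (e v) : (n ⊕ m) → R) :=
      (LinearEquiv.ofInjective_apply _ _).symm
    have h2' : e1 (e v) = (LinearEquiv.ofEq _ _ hrange) (e2 v) := by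
      show e1 ((e1.symm) ((LinearEquiv.ofEq _ _ hrange) (e2 v))) = _
      rw [LinearEquiv.apply_symm_apply]
    show F1.mulVecLin (e v) = F2.mulVecLin v
    rw [h1', h2']
    rfl
  -- determinants
  have hdet : F2.det = F1.det * (LinearMap.toMatrix'
      (e : ((n ⊕ m) → R) →ₗ[R] ((n ⊕ m) → R))).det := by
    have : LinearMap.toMatrix' F2.mulVecLin =
        LinearMap.toMatrix' F1.mulVecLin * LinearMap.toMatrix'
          (e : ((n ⊕ m) → R) →ₗ[R] ((n ⊕ m) → R)) := by
      rw [← LinearMap.toMatrix'_comp, he]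
    have hm : ∀ (G : Matrix (n ⊕ m) (n ⊕ m) R), LinearMap.toMatrix' G.mulVecLin = G := by
      intro G
      rw [← Matrix.toLin'_apply', LinearMap.toMatrix'_toLin']
    rw [hm, hm] at this
    rw [this, Matrix.det_mul]
  have hu : IsUnit (LinearMap.toMatrix'
      (e : ((n ⊕ m) → R) →ₗ[R] ((n ⊕ m) → R))).det := by
    have := LinearEquiv.isUnit_det' e
    rwa [← LinearMap.det_toMatrix'] at this
  have hd1 : F1.det = B.det := by
    rw [hF1def, Matrix.det_fromBlocks_zero₁₂, Matrix.det_one, one_mul]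
  have hd2 : F2.det = A.det := by
    rw [hF2def, Matrix.det_fromBlocks_zero₂₁, Matrix.det_one, mul_one]
  obtain ⟨u, hu⟩ := hu
  refine Associated.symm ⟨u, ?_⟩
  rw [← hd1, ← hd2, hdet, ← hu]

end Aux


/-- Lemma 2.3(1), PID case with square presentation matrices: if the cokernels of square
matrices `P`, `Q`, `S` over a PID fit in a short exact sequence
`0 → coker P → coker Q → coker S → 0`, then `det Q` is associated to `det P · det S`. -/
theorem det_associated_of_ses_coker
    {R : Type*} [CommRing R] [IsDomain R] [IsPrincipalIdealRing R]
    {a b c : ℕ} (P : Matrix (Fin a) (Fin a) R) (Q : Matrix (Fin b) (Fin b) R)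
    (S : Matrix (Fin c) (Fin c) R)
    (h : ∃ (φ : ((Fin a → R) ⧸ LinearMap.range P.mulVecLin) →ₗ[R]
            ((Fin b → R) ⧸ LinearMap.range Q.mulVecLin))
          (ψ : ((Fin b → R) ⧸ LinearMap.range Q.mulVecLin) →ₗ[R]
            ((Fin c → R) ⧸ LinearMap.range S.mulVecLin)),
          Function.Injective φ ∧ Function.Surjective ψ ∧
            LinearMap.range φ = LinearMap.ker ψ) :
    Associated (P.det * S.det) Q.det := by
  classical
  obtain ⟨φ, ψ, hφ, hψ, hexact⟩ := h
  set πa := (LinearMap.range P.mulVecLin).mkQ with hπa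
  set πb := (LinearMap.range Q.mulVecLin).mkQ with hπb
  set πc := (LinearMap.range S.mulVecLin).mkQ with hπc
  by_cases hPS : P.det * S.det = 0
  · -- degenerate case: show det Q = 0 as well
    have hQ : Q.det = 0 := by
      by_contra hQ
      have tQ := coker_torsion_of_det_ne_zero Q hQ
      have tP : Module.IsTorsion R ((Fin a → R) ⧸ LinearMap.range P.mulVecLin) := by
        intro x
        obtain ⟨r, hr⟩ := @tQ (φ x)
        refine ⟨r, hφ ?_⟩
        rw [Submonoid.smul_def, _root_.map_smul, ← Submonoid.smul_def, hr, map_zero]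
      have tS : Module.IsTorsion R ((Fin c → R) ⧸ LinearMap.range S.mulVecLin) := by
        intro y
        obtain ⟨x, rfl⟩ := hψ y
        obtain ⟨r, hr⟩ := @tQ x
        exact ⟨r, by
          rw [Submonoid.smul_def, ← _root_.map_smul, ← Submonoid.smul_def, hr, map_zero]⟩
      exact (mul_ne_zero (det_ne_zero_of_coker_torsion P tP)
        (det_ne_zero_of_coker_torsion S tS)) hPS
    rw [hPS, hQ]
  · have hP : P.det ≠ 0 := fun h0 => hPS (by rw [h0, zero_mul])
    have hS : S.det ≠ 0 := fun h0 => hPS (by rw [h0, mul_zero])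
    have tP := coker_torsion_of_det_ne_zero P hP
    have tS := coker_torsion_of_det_ne_zero S hS
    have tQ : Module.IsTorsion R ((Fin b → R) ⧸ LinearMap.range Q.mulVecLin) := by
      intro x
      obtain ⟨r, hr⟩ := @tS (ψ x)
      have : r • x ∈ LinearMap.ker ψ := by
        rw [LinearMap.mem_ker, Submonoid.smul_def, _root_.map_smul, ← Submonoid.smul_def, hr]
      rw [← hexact] at this
      obtain ⟨z, hz⟩ := this
      obtain ⟨s, hs⟩ := @tP z
      refine ⟨s * r, ?_⟩
      have h1 : (s * r) • x = (s : R) • (r • x) := by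
        rw [Submonoid.smul_def, Submonoid.smul_def, Submonoid.coe_mul, mul_smul]
      rw [h1, ← hz, ← _root_.map_smul, ← Submonoid.smul_def, hs, map_zero]
    have hQ : Q.det ≠ 0 := det_ne_zero_of_coker_torsion Q tQ
    -- Horseshoe: build a square presentation of coker Q of size a + c
    obtain ⟨s, hs⟩ := Module.projective_lifting_property ψ πc hψ
    have hsψ : ∀ w, ψ (s w) = πc w := fun w => congrArg (· w) hs
    -- the map ξ : R^c → R^a with φ (πa (ξ w)) = - s (S *ᵥ w)
    have hgmem : ∀ w, -(s (S.mulVecLin w)) ∈ LinearMap.range φ := by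
      intro w
      rw [hexact, LinearMap.mem_ker, map_neg, hsψ, neg_eq_zero, hπc,
        Submodule.mkQ_apply, Submodule.Quotient.mk_eq_zero]
      exact ⟨w, rfl⟩
    let g : (Fin c → R) →ₗ[R] ((Fin b → R) ⧸ LinearMap.range Q.mulVecLin) :=
      -(s ∘ₗ S.mulVecLin)
    have hgmem' : ∀ w, g w ∈ LinearMap.range φ := fun w => hgmem w
    let gbar : (Fin c → R) →ₗ[R] ((Fin a → R) ⧸ LinearMap.range P.mulVecLin) :=
      (LinearEquiv.ofInjective φ hφ).symm.toLinearMap ∘ₗ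
        (g.codRestrict (LinearMap.range φ) hgmem')
    have hgbar : ∀ w, φ (gbar w) = g w := by
      intro w
      show φ ((LinearEquiv.ofInjective φ hφ).symm (g.codRestrict (LinearMap.range φ) hgmem' w))
        = g w
      have := (LinearEquiv.ofInjective φ hφ).apply_symm_apply
        (g.codRestrict (LinearMap.range φ) hgmem' w)
      calc φ ((LinearEquiv.ofInjective φ hφ).symm (g.codRestrict (LinearMap.range φ) hgmem' w))
          = ((LinearEquiv.ofInjective φ hφ) ((LinearEquiv.ofInjective φ hφ).symm
            (g.codRestrict (LinearMap.range φ) hgmem' w)) : _) := by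
            rw [LinearEquiv.ofInjective_apply]
        _ = g w := by rw [this]; rfl
    obtain ⟨ξ, hξ⟩ := Module.projective_lifting_property πa gbar (Submodule.mkQ_surjective _)
    have hξ' : ∀ w, πa (ξ w) = gbar w := fun w => congrArg (· w) hξ
    set X : Matrix (Fin a) (Fin c) R := LinearMap.toMatrix' ξ with hX
    have hXv : ∀ w, X *ᵥ w = ξ w := by
      intro w
      rw [hX, ← Matrix.mulVecLin_apply, ← Matrix.toLin'_apply', Matrix.toLin'_toMatrix']
    set T : Matrix (Fin a ⊕ Fin c) (Fin a ⊕ Fin c) R := Matrix.fromBlocks P X 0 S with hT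
    have hTv : ∀ w, T *ᵥ w =
        Sum.elim (P *ᵥ (w ∘ Sum.inl) + ξ (w ∘ Sum.inr)) (S *ᵥ (w ∘ Sum.inr)) := by
      intro w
      rw [hT, Matrix.fromBlocks_mulVec, Matrix.zero_mulVec, zero_add, hXv]
    -- the presentation map θ
    let θ : ((Fin a ⊕ Fin c) → R) →ₗ[R] ((Fin b → R) ⧸ LinearMap.range Q.mulVecLin) :=
      (φ ∘ₗ πa ∘ₗ LinearMap.funLeft R R Sum.inl) + (s ∘ₗ LinearMap.funLeft R R Sum.inr)
    have hθ : ∀ v, θ v = φ (πa (v ∘ Sum.inl)) + s (v ∘ Sum.inr) := fun v => rfl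
    have hθsurj : Function.Surjective θ := by
      intro y
      obtain ⟨z, hz⟩ := Submodule.mkQ_surjective _ (ψ y)
      have : y - s z ∈ LinearMap.ker ψ := by
        rw [LinearMap.mem_ker, map_sub, hsψ, hπc, hz, sub_self]
      rw [← hexact] at this
      obtain ⟨x', hx'⟩ := this
      obtain ⟨x, hx⟩ := Submodule.mkQ_surjective _ x'
      refine ⟨Sum.elim x z, ?_⟩
      rw [hθ]
      simp only [Sum.elim_comp_inl, Sum.elim_comp_inr]
      rw [hπa, hx, hx']
      abel
    have hθker : LinearMap.ker θ = LinearMap.range T.mulVecLin := by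
      ext v
      constructor
      · intro hv
        rw [LinearMap.mem_ker, hθ] at hv
        -- apply ψ
        have h2 : πc (v ∘ Sum.inr) = 0 := by
          have := congrArg ψ hv
          rw [map_add, map_zero, hsψ] at this
          have hker : φ (πa (v ∘ Sum.inl)) ∈ LinearMap.ker ψ := by
            rw [← hexact]; exact ⟨_, rfl⟩
          rw [LinearMap.mem_ker] at hker
          rwa [hker, zero_add] at this
        rw [hπc, Submodule.mkQ_apply, Submodule.Quotient.mk_eq_zero] at h2
        obtain ⟨w, hw⟩ := h2
        rw [Matrix.mulVecLin_apply] at hw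
        -- now the first component
        have h1 : πa (v ∘ Sum.inl - ξ w) = 0 := by
          apply hφ
          rw [map_zero, map_sub, hξ', map_sub, hgbar]
          show φ (πa (v ∘ Sum.inl)) - -(s (S.mulVecLin w)) = 0
          rw [Matrix.mulVecLin_apply, hw, sub_neg_eq_add, hv]
        rw [hπa, Submodule.mkQ_apply, Submodule.Quotient.mk_eq_zero] at h1
        obtain ⟨z, hz⟩ := h1
        rw [Matrix.mulVecLin_apply] at hz
        refine ⟨Sum.elim z w, ?_⟩
        rw [Matrix.mulVecLin_apply, hTv]
        simp only [Sum.elim_comp_inl, Sum.elim_comp_inr]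
        funext i
        cases i with
        | inl i =>
          show (P *ᵥ z + ξ w) i = v (Sum.inl i)
          rw [hz]
          simp
        | inr i =>
          show (S *ᵥ w) i = v (Sum.inr i)
          rw [hw]
          rfl
      · rintro ⟨u, rfl⟩
        rw [LinearMap.mem_ker, Matrix.mulVecLin_apply, hTv, hθ]
        simp only [Sum.elim_comp_inl, Sum.elim_comp_inr]
        have hPmem : πa (P *ᵥ (u ∘ Sum.inl) + ξ (u ∘ Sum.inr)) = πa (ξ (u ∘ Sum.inr)) := by
          rw [hπa, map_add]
          have : πa (P *ᵥ (u ∘ Sum.inl)) = 0 := by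
            rw [hπa, Submodule.mkQ_apply, Submodule.Quotient.mk_eq_zero]
            exact ⟨u ∘ Sum.inl, rfl⟩
          rw [hπa] at this
          rw [this, zero_add]
        rw [hPmem, hξ', hgbar]
        show -(s (S.mulVecLin (u ∘ Sum.inr))) + s (S *ᵥ (u ∘ Sum.inr)) = 0
        rw [Matrix.mulVecLin_apply, neg_add_cancel]
    -- conclude via the two-presentations lemma
    have hdetT : T.det = P.det * S.det := by
      rw [hT, Matrix.det_fromBlocks_zero₂₁]
    have hTne : T.det ≠ 0 := by rw [hdetT]; exact hPS
    have main := det_associated_of_two_presentations T Q θ πb hθsurj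
      (Submodule.mkQ_surjective _) hθker (Submodule.ker_mkQ _)
      (injective_mulVecLin_of_det_ne_zero T hTne)
      (injective_mulVecLin_of_det_ne_zero Q hQ)
    rwa [hdetT] at main
end

section
/- Let H be a finite abelian group and let G = ℤ × H. Let μ, λ ∈ G, let m₁, m₂ be integers, and set γ = m₁·μ + m₂·λ. Let N be a finite abelian group, and suppose there is an injective group homomorphism from G/⟨γ⟩ into N, where ⟨γ⟩ is the cyclic subgroup generated by γ. Then gcd(m₁, m₂) · |H| divides |N|. -/
lemma aux_card_quot {H : Type*} [AddCommGroup H] (γ : ℤ × H) (ha : γ.1 ≠ 0) :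
    Nat.card ((ℤ × H) ⧸ AddSubgroup.zmultiples γ) = γ.1.natAbs * Nat.card H := by
  set n := γ.1.natAbs with hn
  have hn0 : 0 < n := Int.natAbs_pos.mpr ha
  haveI : NeZero n := ⟨hn0.ne'⟩
  set g : ZMod n × H → (ℤ × H) ⧸ AddSubgroup.zmultiples γ :=
    fun p => QuotientAddGroup.mk ((p.1.val : ℤ), p.2) with hg
  have hbij : Function.Bijective g := by
    constructor
    · rintro ⟨c, y⟩ ⟨c', y'⟩ hcc
      simp only [hg] at hcc
      rw [QuotientAddGroup.eq] at hcc
      obtain ⟨k, hk⟩ := AddSubgroup.mem_zmultiples_iff.mp hcc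
      have hk1 : k * γ.1 = (c'.val : ℤ) - c.val := by
        have := congrArg Prod.fst hk
        simpa [neg_add_eq_sub] using this
      have hk0 : k = 0 := by
        by_contra hk0
        have h1 : (n : ℤ) ≤ |k * γ.1| := by
          rw [abs_mul]
          calc (n : ℤ) = 1 * |γ.1| := by rw [one_mul, Int.abs_eq_natAbs, hn]
          _ ≤ |k| * |γ.1| := by
            apply mul_le_mul_of_nonneg_right _ (abs_nonneg _)
            exact Int.one_le_abs (by exact_mod_cast hk0)
        have h2 : |(c'.val : ℤ) - c.val| < n := by
          have hc : (c.val : ℤ) < n := by exact_mod_cast c.val_lt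
          have hc' : (c'.val : ℤ) < n := by exact_mod_cast c'.val_lt
          rw [abs_sub_lt_iff]
          constructor <;> omega
        rw [hk1] at h1; omega
      rw [hk0, zero_smul] at hk
      have hpq : ((c.val : ℤ), y) = ((c'.val : ℤ), y') := neg_add_eq_zero.mp hk.symm
      rw [Prod.mk.injEq] at hpq
      have : c = c' := by
        have : c.val = c'.val := by exact_mod_cast hpq.1
        exact ZMod.val_injective n this
      simp [this, hpq.2]
    · intro q
      obtain ⟨⟨x, y⟩, rfl⟩ := QuotientAddGroup.mk_surjective q
      set c : ZMod n := (x : ZMod n) with hc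
      have hdvd : (n : ℤ) ∣ x - c.val := by
        rw [← ZMod.intCast_zmod_eq_zero_iff_dvd]
        push_cast
        simp [hc, ZMod.intCast_cast]
      have hdvd' : γ.1 ∣ x - c.val := (Int.natAbs_dvd).mp (by rwa [← hn])
      obtain ⟨k, hk⟩ := hdvd'
      refine ⟨⟨c, y - k • γ.2⟩, ?_⟩
      simp only [hg]
      rw [QuotientAddGroup.eq]
      apply AddSubgroup.mem_zmultiples_iff.mpr
      refine ⟨k, ?_⟩
      ext
      · simp only [Prod.fst_add, Prod.fst_neg, smul_eq_mul, Prod.smul_fst]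
        have hk' : x - (c.val : ℤ) = k * γ.1 := by rw [mul_comm]; exact hk
        omega
      · simp only [Prod.snd_add, Prod.snd_neg, Prod.smul_snd]
        abel
  rw [← Nat.card_congr (Equiv.ofBijective g hbij), Nat.card_prod, Nat.card_zmod]

/-- Algebraic core of Ruberman's proof of Krebes's theorem: if `G = ℤ × H` with `H`
finite abelian, `γ = m₁·μ + m₂·λ`, and `G/⟨γ⟩` embeds into a finite abelian group `N`,
then `gcd(m₁, m₂) · |H|` divides `|N|`. -/
theorem gcd_mul_card_dvd_of_quotient_embeds
    {H : Type*} [AddCommGroup H] [Finite H]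
    {N : Type*} [AddCommGroup N] [Finite N]
    (μ lam : ℤ × H) (m₁ m₂ : ℤ)
    (γ : ℤ × H) (hγ : γ = m₁ • μ + m₂ • lam)
    (h : ∃ φ : ((ℤ × H) ⧸ AddSubgroup.zmultiples γ) →+ N, Function.Injective φ) :
    Int.gcd m₁ m₂ * Nat.card H ∣ Nat.card N := by
  obtain ⟨φ, hφ⟩ := h
  haveI : Finite ((ℤ × H) ⧸ AddSubgroup.zmultiples γ) := Finite.of_injective φ hφ
  have ha : γ.1 ≠ 0 := by
    intro ha
    have hker : ∀ x ∈ AddSubgroup.zmultiples γ, (AddMonoidHom.fst ℤ H) x = 0 := by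
      intro x hx
      obtain ⟨k, rfl⟩ := AddSubgroup.mem_zmultiples_iff.mp hx
      simp [ha]
    set ψ : ((ℤ × H) ⧸ AddSubgroup.zmultiples γ) →+ ℤ :=
      QuotientAddGroup.lift _ (AddMonoidHom.fst ℤ H) hker with hψ
    have hsurj : Function.Surjective ψ := fun z => ⟨QuotientAddGroup.mk (z, 0), rfl⟩
    haveI := Finite.of_surjective ψ hsurj; exact not_finite ℤ
  have hfst : γ.1 = m₁ * μ.1 + m₂ * lam.1 := by
    rw [hγ]; simp
  have hd : (Int.gcd m₁ m₂ : ℤ) ∣ γ.1 := by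
    rw [hfst]
    exact dvd_add (Dvd.dvd.mul_right (Int.gcd_dvd_left m₁ m₂) _)
      (Dvd.dvd.mul_right (Int.gcd_dvd_right m₁ m₂) _)
  have hdn : Int.gcd m₁ m₂ ∣ γ.1.natAbs := by
    have := Int.natAbs_dvd_natAbs.mpr hd
    simpa using this
  calc Int.gcd m₁ m₂ * Nat.card H ∣ γ.1.natAbs * Nat.card H :=
        Nat.mul_dvd_mul_right hdn _
    _ = Nat.card ((ℤ × H) ⧸ AddSubgroup.zmultiples γ) := (aux_card_quot γ ha).symm
    _ ∣ Nat.card N := AddSubgroup.card_dvd_of_injective φ hφ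
end

section
/- Let R be a principal ideal domain. Let B be a finitely generated torsion R-module, let A be a submodule of B, and suppose P is an a × a matrix over R whose cokernel R^a/(range of P) is isomorphic to A as an R-module, and Q is a b × b matrix over R whose cokernel R^b/(range of Q) is isomorphic to B as an R-module. Then det P divides det Q in R. -/
open Matrix LinearMap Submodule

lemma Aux.exists_mul_eq' {R : Type*} [CommRing R] {n k l : Type*} [Fintype n] [Fintype k]
    [Fintype l] (M₁ : Matrix n k R) (M₂ : Matrix n l R)
    (h : ∀ j, (fun i => M₂ i j) ∈ LinearMap.range M₁.mulVecLin) :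
    ∃ D : Matrix k l R, M₁ * D = M₂ := by
  choose d hd using h
  refine ⟨Matrix.of fun r j => d j r, ?_⟩
  ext i j
  have := congrFun (hd j) i
  simpa [Matrix.mul_apply, Matrix.mulVecLin_apply, Matrix.mulVec, dotProduct] using this

/-- Determinants of square presentation matrices of isomorphic modules divide each other. -/
lemma Aux.det_dvd_det_of_coker_equiv {R : Type*} [CommRing R] {a m : ℕ}
    (P : Matrix (Fin a) (Fin a) R) (S : Matrix (Fin m) (Fin m) R)
    (e : ((Fin a → R) ⧸ LinearMap.range P.mulVecLin) ≃ₗ[R]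
      ((Fin m → R) ⧸ LinearMap.range S.mulVecLin)) :
    P.det ∣ S.det := by
  classical
  set pP := LinearMap.range P.mulVecLin with hpP
  set pS := LinearMap.range S.mulVecLin with hpS
  obtain ⟨U, hU⟩ := Module.projective_lifting_property pS.mkQ (e.toLinearMap ∘ₗ pP.mkQ)
    (Submodule.mkQ_surjective _)
  obtain ⟨V, hV⟩ := Module.projective_lifting_property pP.mkQ (e.symm.toLinearMap ∘ₗ pS.mkQ)
    (Submodule.mkQ_surjective _)
  have hmem1 : ∀ x : Fin a → R, x - V (U x) ∈ pP := by
    intro x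
    have h1 : pS.mkQ (U x) = e (pP.mkQ x) := LinearMap.congr_fun hU x
    have h2 : pP.mkQ (V (U x)) = e.symm (pS.mkQ (U x)) := LinearMap.congr_fun hV (U x)
    have : pP.mkQ (x - V (U x)) = 0 := by
      rw [map_sub, h2, h1, LinearEquiv.symm_apply_apply, sub_self]
    rwa [Submodule.mkQ_apply, Submodule.Quotient.mk_eq_zero] at this
  have hmem2 : ∀ y, y ∈ pS → V y ∈ pP := by
    intro y hy
    have h2 : pP.mkQ (V y) = e.symm (pS.mkQ y) := LinearMap.congr_fun hV y
    have hy0 : pS.mkQ y = 0 := by rwa [Submodule.mkQ_apply, Submodule.Quotient.mk_eq_zero]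
    have : pP.mkQ (V y) = 0 := by rw [h2, hy0, map_zero]
    rwa [Submodule.mkQ_apply, Submodule.Quotient.mk_eq_zero] at this
  set Um := LinearMap.toMatrix' U with hUm
  set Vm := LinearMap.toMatrix' V with hVm
  have hUmv : ∀ x, Um.mulVec x = U x := fun x => by
    rw [← Matrix.toLin'_apply, hUm, Matrix.toLin'_toMatrix']
  have hVmv : ∀ x, Vm.mulVec x = V x := fun x => by
    rw [← Matrix.toLin'_apply, hVm, Matrix.toLin'_toMatrix']
  set N₁ : Matrix (Fin a ⊕ Fin m) (Fin a ⊕ Fin m) R := Matrix.fromBlocks P Vm 0 1 with hN₁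
  set N₂ : Matrix (Fin a ⊕ Fin m) (Fin a ⊕ Fin m) R := Matrix.fromBlocks 1 0 Um S with hN₂
  have hcols : ∀ j, (fun i => N₂ i j) ∈ LinearMap.range N₁.mulVecLin := by
    rintro (i | j)
    · -- column `inl i` : `Sum.elim (Pi.single i 1) (U (Pi.single i 1))`
      set x : Fin a → R := Pi.single i 1 with hx
      obtain ⟨s, hs⟩ := hmem1 x
      refine ⟨Sum.elim s (U x), ?_⟩
      rw [Matrix.mulVecLin_apply, hN₁, Matrix.fromBlocks_mulVec]
      funext r
      cases r with
      | inl k =>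
        have : P.mulVec s = x - V (U x) := by
          rw [← hs, Matrix.mulVecLin_apply]
        simp [this, hVmv, hx, hN₂, Matrix.one_apply, Pi.single_apply, eq_comm]
      | inr k =>
        have hz : (0 : Matrix (Fin m) (Fin a) R).mulVec s = 0 := Matrix.zero_mulVec s
        simp [hz, Matrix.one_mulVec, hN₂, ← hUmv, hx, Matrix.mulVec_single_one]
    · -- column `inr j` : `Sum.elim 0 (S.mulVec (Pi.single j 1))`
      set z : Fin m → R := Pi.single j 1 with hz
      have hy : S.mulVecLin z ∈ pS := LinearMap.mem_range_self _ z
      have : -(V (S.mulVecLin z)) ∈ pP := neg_mem (hmem2 _ hy)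
      obtain ⟨s, hs⟩ := this
      refine ⟨Sum.elim s (S.mulVec z), ?_⟩
      rw [Matrix.mulVecLin_apply, hN₁, Matrix.fromBlocks_mulVec]
      funext r
      cases r with
      | inl k =>
        have : P.mulVec s = -(V (S.mulVecLin z)) := by
          rw [← hs, Matrix.mulVecLin_apply]
        simp [this, hVmv, Matrix.mulVecLin_apply, hN₂]
        
      | inr k =>
        have h0 : (0 : Matrix (Fin m) (Fin a) R).mulVec s = 0 := Matrix.zero_mulVec s
        simp [h0, Matrix.one_mulVec, hN₂, hz, Matrix.mulVec_single_one]
  obtain ⟨D, hD⟩ := Aux.exists_mul_eq' N₁ N₂ hcols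
  have hdet : N₂.det = N₁.det * D.det := by rw [← hD, Matrix.det_mul]
  have h1 : N₁.det = P.det := by
    rw [hN₁, Matrix.det_fromBlocks_zero₂₁, Matrix.det_one, mul_one]
  have h2 : N₂.det = S.det := by
    rw [hN₂, Matrix.det_fromBlocks_zero₁₂, Matrix.det_one, one_mul]
  exact ⟨D.det, by rw [← h1, ← hdet, h2]⟩

lemma Aux.isTorsion_of_equiv {R M N : Type*} [CommRing R] [AddCommGroup M] [Module R M]
    [AddCommGroup N] [Module R N] (e : M ≃ₗ[R] N) (h : Module.IsTorsion R M) :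
    Module.IsTorsion R N := by
  intro x
  obtain ⟨r, hr⟩ := @h (e.symm x)
  refine ⟨r, ?_⟩
  have : e (r • e.symm x) = e 0 := by rw [hr]
  simpa [Submonoid.smul_def] using this

lemma Aux.rank_eq_of_torsion_quotient {R : Type*} [CommRing R] [IsDomain R] {b m : ℕ}
    (N : Submodule R (Fin b → R)) (c : Module.Basis (Fin m) R N)
    (h : Module.IsTorsion R ((Fin b → R) ⧸ N)) : m = b := by
  classical
  have : Module.Finite R N := Module.Finite.of_basis c
  apply le_antisymm
  · have hli : LinearIndependent R (N.subtype ∘ c) :=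
      c.linearIndependent.map' N.subtype (Submodule.ker_subtype N)
    simpa [Module.finrank_pi] using hli.fintype_card_le_finrank
  · let sgl : Fin b → (Fin b → R) := fun i => Pi.single i 1
    choose r hr using fun i : Fin b => @h (Submodule.Quotient.mk (sgl i))
    have hmem : ∀ i, (r i : R) • sgl i ∈ N := by
      intro i
      have := hr i
      rw [Submonoid.smul_def, ← Submodule.Quotient.mk_smul, Submodule.Quotient.mk_eq_zero] at this
      exact this
    set v : Fin b → N := fun i => ⟨(r i : R) • sgl i, hmem i⟩ with hv
    have hind : LinearIndependent R v := by
      apply LinearIndependent.of_comp N.subtype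
      rw [Fintype.linearIndependent_iff]
      intro g hg i
      have := congrFun hg i
      simp only [Finset.sum_apply, Function.comp_apply, hv, Submodule.coe_subtype,
        Pi.smul_apply, smul_eq_mul, sgl, Pi.single_apply, mul_ite, mul_one, mul_zero,
        Finset.sum_ite_eq, Finset.mem_univ, if_true, Pi.zero_apply] at this
      rcases mul_eq_zero.mp this with h1 | h1
      · exact h1
      · exact absurd h1 (nonZeroDivisors.coe_ne_zero (r i))
    simpa [Module.finrank_eq_card_basis c] using hind.fintype_card_le_finrank

/-- Over a PID, if `A` is a submodule of a finitely generated torsion module `B`, and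
`P`, `Q` are square matrices presenting `A` and `B` respectively (their cokernels are
isomorphic to `A` and `B`), then `det P` divides `det Q`. -/
theorem det_dvd_det_of_submodule_of_torsion
    {R : Type*} [CommRing R] [IsDomain R] [IsPrincipalIdealRing R]
    {B : Type*} [AddCommGroup B] [Module R B] [Module.Finite R B]
    (hB : Module.IsTorsion R B) (A : Submodule R B)
    {a b : ℕ} (P : Matrix (Fin a) (Fin a) R) (Q : Matrix (Fin b) (Fin b) R)
    (hP : Nonempty (((Fin a → R) ⧸ LinearMap.range P.mulVecLin) ≃ₗ[R] A))
    (hQ : Nonempty (((Fin b → R) ⧸ LinearMap.range Q.mulVecLin) ≃ₗ[R] B)) :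
    P.det ∣ Q.det := by
  classical
  obtain ⟨eP⟩ := hP
  obtain ⟨eQ⟩ := hQ
  set K := LinearMap.range Q.mulVecLin with hK
  let g : (Fin b → R) →ₗ[R] B := eQ.toLinearMap ∘ₗ K.mkQ
  have hgsurj : Function.Surjective g := eQ.surjective.comp (Submodule.mkQ_surjective K)
  have hgker : ∀ x, g x = 0 ↔ x ∈ K := by
    intro x
    simp only [g, LinearMap.comp_apply, Submodule.mkQ_apply]
    constructor
    · intro h0
      have : Submodule.Quotient.mk x = (0 : (Fin b → R) ⧸ K) :=
        eQ.injective (by simpa using h0)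
      rwa [Submodule.Quotient.mk_eq_zero] at this
    · intro hx
      rw [(Submodule.Quotient.mk_eq_zero K).mpr hx]
      simp
  set A₀ : Submodule R (Fin b → R) := A.comap g with hA₀
  have hKA₀ : K ≤ A₀ := by
    intro x hx
    simp only [hA₀, Submodule.mem_comap]
    rw [(hgker x).mpr hx]
    exact A.zero_mem
  obtain ⟨m, c⟩ := Submodule.basisOfPid (Pi.basisFun R (Fin b)) A₀
  have hA₀tor : Module.IsTorsion R ((Fin b → R) ⧸ A₀) := by
    intro x
    obtain ⟨y, rfl⟩ := Submodule.mkQ_surjective A₀ x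
    obtain ⟨r, hr⟩ := @hB (g y)
    refine ⟨r, ?_⟩
    rw [Submodule.mkQ_apply, Submonoid.smul_def, ← Submodule.Quotient.mk_smul,
      Submodule.Quotient.mk_eq_zero]
    simp only [hA₀, Submodule.mem_comap]
    rw [Submonoid.smul_def] at hr
    rw [LinearMap.map_smul, hr]
    exact A.zero_mem
  have hmb : m = b := Aux.rank_eq_of_torsion_quotient A₀ c hA₀tor
  subst hmb
  let γ : A₀ ≃ₗ[R] (Fin m → R) := c.equivFun
  let Kc : Submodule R A₀ := K.comap A₀.subtype
  let K' : Submodule R (Fin m → R) := Kc.map (γ : A₀ →ₗ[R] (Fin m → R))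
  let g₀ : A₀ →ₗ[R] A := LinearMap.codRestrict A (g ∘ₗ A₀.subtype) (fun x => x.2)
  have hg₀surj : Function.Surjective g₀ := by
    intro y
    obtain ⟨x, hx⟩ := hgsurj y.1
    have hxA₀ : x ∈ A₀ := by
      simp only [hA₀, Submodule.mem_comap]
      rw [hx]; exact y.2
    exact ⟨⟨x, hxA₀⟩, Subtype.ext hx⟩
  have hg₀ker : LinearMap.ker g₀ = Kc := by
    ext x
    simp only [LinearMap.mem_ker, Kc, Submodule.mem_comap]
    rw [← hgker (A₀.subtype x)]
    constructor
    · intro h0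
      have := congrArg Subtype.val h0
      exact this
    · intro h0
      apply Subtype.ext
      exact h0
  let e₁ : (A₀ ⧸ Kc) ≃ₗ[R] A :=
    (Submodule.quotEquivOfEq _ _ hg₀ker.symm).trans (g₀.quotKerEquivOfSurjective hg₀surj)
  let e₂ : (A₀ ⧸ Kc) ≃ₗ[R] ((Fin m → R) ⧸ K') := Submodule.Quotient.equiv Kc K' γ rfl
  have hAtor : Module.IsTorsion R A := by
    intro x
    obtain ⟨r, hr⟩ := @hB (x : B)
    refine ⟨r, ?_⟩
    apply Subtype.ext
    rw [Submonoid.smul_def] at hr ⊢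
    simpa using hr
  have hK'tor : Module.IsTorsion R ((Fin m → R) ⧸ K') :=
    Aux.isTorsion_of_equiv (e₁.symm.trans e₂) hAtor
  obtain ⟨n, d⟩ := Submodule.basisOfPid (Pi.basisFun R (Fin m)) K'
  have hnm : n = m := Aux.rank_eq_of_torsion_quotient K' d hK'tor
  subst hnm
  let S : Matrix (Fin n) (Fin n) R :=
    LinearMap.toMatrix' (K'.subtype ∘ₗ (d.equivFun.symm : (Fin n → R) ≃ₗ[R] K').toLinearMap)
  have hS : S.mulVecLin = K'.subtype ∘ₗ d.equivFun.symm.toLinearMap := by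
    rw [← Matrix.toLin'_apply', Matrix.toLin'_toMatrix']
  have hSrange : LinearMap.range S.mulVecLin = K' := by
    rw [hS, LinearMap.range_comp, LinearEquiv.range, Submodule.map_top, Submodule.range_subtype]
  let e₃ : ((Fin a → R) ⧸ LinearMap.range P.mulVecLin) ≃ₗ[R]
      ((Fin n → R) ⧸ LinearMap.range S.mulVecLin) :=
    (eP.trans (e₁.symm.trans e₂)).trans (Submodule.quotEquivOfEq _ _ hSrange.symm)
  have hPS : P.det ∣ S.det := Aux.det_dvd_det_of_coker_equiv P S e₃
  let T :=
    (γ : A₀ →ₗ[R] (Fin n → R)) ∘ₗ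
      (LinearMap.codRestrict A₀ Q.mulVecLin (fun x => hKA₀ (LinearMap.mem_range_self _ x)))
  let ι := A₀.subtype ∘ₗ (γ.symm : (Fin n → R) →ₗ[R] A₀)
  have hfact : ι ∘ₗ T = Q.mulVecLin := by
    apply LinearMap.ext
    intro x
    simp [ι, T, LinearMap.comp_apply]
  have hQmat : (LinearMap.toMatrix' ι) * (LinearMap.toMatrix' T) = Q := by
    rw [← LinearMap.toMatrix'_comp, hfact, ← Matrix.toLin'_apply', LinearMap.toMatrix'_toLin']
  have hTrange : ∀ x, T x ∈ K' := by
    intro x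
    apply Submodule.mem_map_of_mem
    show _ ∈ Kc
    simp only [Kc, Submodule.mem_comap, Submodule.coe_subtype, LinearMap.codRestrict_apply]
    exact LinearMap.mem_range_self _ x
  have hTm : ∀ x, (LinearMap.toMatrix' T).mulVec x = T x := by
    intro x
    rw [← Matrix.toLin'_apply, Matrix.toLin'_toMatrix']
  obtain ⟨D, hD⟩ := Aux.exists_mul_eq' S (LinearMap.toMatrix' T) (by
    intro j
    rw [hSrange]
    have h1 : (fun i => (LinearMap.toMatrix' T) i j) = T (Pi.single j 1) := by
      rw [← hTm]
      funext i
      rw [Matrix.mulVec_single_one]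
      rfl
    rw [h1]
    exact hTrange _)
  have hdetQ : Q.det = (LinearMap.toMatrix' ι).det * (S.det * D.det) := by
    rw [← hQmat, ← hD, Matrix.det_mul, Matrix.det_mul]
  exact hPS.trans ⟨(LinearMap.toMatrix' ι).det * D.det, by rw [hdetQ]; ring⟩
end
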